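/- Let $\mathcal{L}$ be an $n\times n$ quasi-positive irreducible matrix with zero column sums, $\alpha$ its positive normalized null vector, $d_I>0$, and $\beta,\gamma\in\mathbb{R}^n_{>0}$, $N>0$, $l>0$. If $U\in\mathbb{R}^n_{>0}$ satisfies $d_I\mathcal{L}U + (l\beta\circ(N\alpha - d_I U) - \gamma)\circ U = 0$, then $d_I U_j < N\alpha_j$ for every $j$. -/

import Mathlib

/-- A square matrix is irreducible if for every nonempty proper coordinate subset `s`
there is a nonzero entry `L i j` with `j ∈ s` and `i ∉ s`. -/
def Matrix.IsIrreducibleOfCoords {n : ℕ} (L : Matrix (Fin n) (Fin n) ℝ) : Prop :=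
  ∀ s : Finset (Fin n), s.Nonempty → s ≠ Finset.univ →
    ∃ i ∉ s, ∃ j ∈ s, L i j ≠ 0

/-- A positive solution `U` of the logistic-type system
`d_I L U + (lβ∘(Nα - d_I U) - γ)∘U = 0` satisfies `d_I U_j < N α_j` for every `j`. -/
theorem logistic_solution_upper_bound {n : ℕ}
    (L : Matrix (Fin n) (Fin n) ℝ)
    (hquasi : ∀ i j, i ≠ j → 0 ≤ L i j)
    (hirr : L.IsIrreducibleOfCoords)
    (hcol : ∀ j, ∑ i, L i j = 0)
    (α : Fin n → ℝ) (hα0 : L.mulVec α = 0) (hαpos : ∀ j, 0 < α j)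
    (hαsum : ∑ j, α j = 1)
    (dI N l : ℝ) (hdI : 0 < dI) (hN : 0 < N) (hl : 0 < l)
    (β γ U : Fin n → ℝ) (hβ : ∀ j, 0 < β j) (hγ : ∀ j, 0 < γ j)
    (hU : ∀ j, 0 < U j)
    (heq : ∀ i, dI * (∑ j, L i j * U j) +
      (l * β i * (N * α i - dI * U i) - γ i) * U i = 0) :
    ∀ j, dI * U j < N * α j := by
  set V : Fin n → ℝ := fun j => N * α j - dI * U j with hV
  have key : ∀ i, ∑ j, L i j * V j = (l * β i * V i - γ i) * U i := by
    intro i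
    have hαi : ∑ j, L i j * α j = 0 := by
      have := congrFun hα0 i
      simpa [Matrix.mulVec, dotProduct] using this
    have h := heq i
    have expand : ∑ j, L i j * V j
        = N * (∑ j, L i j * α j) - dI * (∑ j, L i j * U j) := by
      rw [Finset.mul_sum, Finset.mul_sum, ← Finset.sum_sub_distrib]
      exact Finset.sum_congr rfl (fun j _ => by simp [hV]; ring)
    rw [expand, hαi]
    simp only [hV] at h ⊢
    linarith
  intro j0
  by_contra hcon
  push_neg at hcon
  have hVj0 : V j0 ≤ 0 := by simp [hV]; linarith
  set s : Finset (Fin n) := Finset.univ.filter (fun j => V j ≤ 0) with hs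
  have hj0s : j0 ∈ s := by simp [hs, hVj0]
  have hsne : s.Nonempty := ⟨j0, hj0s⟩
  have hneg : ∑ i ∈ s, (l * β i * V i - γ i) * U i < 0 := by
    apply Finset.sum_neg _ hsne
    intro i hi
    have hVi : V i ≤ 0 := by simpa [hs] using hi
    have h1 : l * β i * V i ≤ 0 :=
      mul_nonpos_of_nonneg_of_nonpos (mul_nonneg hl.le (hβ i).le) hVi
    have h2 : 0 < γ i * U i := mul_pos (hγ i) (hU i)
    nlinarith [hU i]
  have hsum : ∑ i ∈ s, (l * β i * V i - γ i) * U i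
      = ∑ j, (∑ i ∈ s, L i j) * V j := by
    rw [← Finset.sum_congr rfl (fun i (hi : i ∈ s) => key i)]
    rw [Finset.sum_comm]
    exact Finset.sum_congr rfl (fun j _ => (Finset.sum_mul _ _ _).symm)
  have hnonneg : 0 ≤ ∑ j, (∑ i ∈ s, L i j) * V j := by
    apply Finset.sum_nonneg
    intro j _
    by_cases hjs : j ∈ s
    · have hVj : V j ≤ 0 := by simpa [hs] using hjs
      have hcolsum : ∑ i ∈ s, L i j = - ∑ i ∈ sᶜ, L i j := by
        have := Finset.sum_add_sum_compl s (fun i => L i j)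
        have h0 := hcol j
        linarith
      have hcomp : 0 ≤ ∑ i ∈ sᶜ, L i j := by
        apply Finset.sum_nonneg
        intro i hi
        have hine : i ≠ j := fun h => by
          rw [h] at hi; exact (Finset.mem_compl.mp hi) hjs
        exact hquasi i j hine
      have : ∑ i ∈ s, L i j ≤ 0 := by rw [hcolsum]; linarith
      nlinarith
    · have hVj : 0 ≤ V j := by
        by_contra h
        exact hjs (by simp [hs]; linarith)
      have : 0 ≤ ∑ i ∈ s, L i j := by
        apply Finset.sum_nonneg
        intro i hi
        exact hquasi i j (fun h => hjs (h ▸ hi))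
      exact mul_nonneg this hVj
  rw [hsum] at hneg
  linarith
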